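/- arXiv:1804.07575 — 5 statements merged into one kernel-verified Lean document; each statement's English description precedes it below -/
import Mathlib

section
/- For any natural number N ≥ 1, ∑_{k=−N}^{N} C(N,|k|)/C(N+|k|,|k|) = 2^{2N} / C(2N, N). Equivalently, 2^{−2N} · ∑_{j=0}^{2N} N!·N!/(j!·(2N−j)!) = N!·N!/(2N)!. -/
open Nat Finset in
lemma stmt3_sumRange (N : ℕ) :
    (∑ j ∈ Finset.range (2*N+1),
        ((N ! : ℝ) * (N ! : ℝ)) / ((j ! : ℝ) * ((2*N - j)! : ℝ)))
      = 2 ^ (2*N) * ((N ! : ℝ) * (N ! : ℝ)) / ((2*N)! : ℝ) := by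
  have h : ∀ j ∈ Finset.range (2*N+1),
      ((N ! : ℝ) * (N ! : ℝ)) / ((j ! : ℝ) * ((2*N - j)! : ℝ))
        = ((2*N).choose j : ℝ) * (((N ! : ℝ) * (N ! : ℝ)) / ((2*N)! : ℝ)) := by
    intro j hj
    have hj' : j ≤ 2*N := by simpa using Nat.lt_succ_iff.mp (Finset.mem_range.mp hj)
    rw [Nat.cast_choose ℝ hj']
    have h1 : (j ! : ℝ) ≠ 0 := by positivity
    have h2 : (((2*N - j)!) : ℝ) ≠ 0 := by positivity
    have h3 : (((2*N)!) : ℝ) ≠ 0 := by positivity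
    field_simp
  rw [Finset.sum_congr rfl h, ← Finset.sum_mul]
  have : (∑ j ∈ Finset.range (2*N+1), (((2*N).choose j : ℝ))) = 2 ^ (2*N) := by
    rw [← Nat.cast_sum]
    norm_cast
    exact Nat.sum_range_choose (2*N)
  rw [this]; ring

open Nat Finset in
lemma stmt3_termEq (N a : ℕ) (ha : a ≤ N) :
    ((N.choose a : ℝ)) / (((N + a).choose a : ℝ))
      = ((N ! : ℝ) * (N ! : ℝ)) / (((N + a)! : ℝ) * ((N - a)! : ℝ)) := by
  rw [Nat.cast_choose ℝ ha, Nat.cast_choose ℝ (Nat.le_add_left a N)]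
  have h0 : (a ! : ℝ) ≠ 0 := by positivity
  have h1 : ((N - a)! : ℝ) ≠ 0 := by positivity
  have h2 : ((N + a)! : ℝ) ≠ 0 := by positivity
  have h3 : ((N)! : ℝ) ≠ 0 := by positivity
  have h4 : ((N + a - a)! : ℝ) = (N ! : ℝ) := by norm_num
  rw [h4]
  field_simp

open Nat Finset in
lemma stmt3_reindex (N : ℕ) :
    (∑ k ∈ Finset.Icc (-(N:ℤ)) (N:ℤ),
      ((N ! : ℝ) * (N ! : ℝ)) / (((N + k.natAbs)! : ℝ) * ((N - k.natAbs)! : ℝ)))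
    = ∑ j ∈ Finset.range (2*N+1),
      ((N ! : ℝ) * (N ! : ℝ)) / ((j ! : ℝ) * ((2*N - j)! : ℝ)) := by
  apply Finset.sum_nbij' (fun (k : ℤ) => (k + N).toNat) (fun (m : ℕ) => (m : ℤ) - N)
  · intro k hk
    simp only [Finset.mem_Icc] at hk
    simp only [Finset.mem_range]
    omega
  · intro m hm
    simp only [Finset.mem_range] at hm
    simp only [Finset.mem_Icc]
    omega
  · intro k hk
    simp only [Finset.mem_Icc] at hk
    omega
  · intro m hm
    simp only [Finset.mem_range] at hm
    omega
  · intro k hk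
    simp only [Finset.mem_Icc] at hk
    rcases le_or_gt 0 k with h | h
    · have h1 : (k + ↑N).toNat = N + k.natAbs := by omega
      have h3 : 2*N - (N + k.natAbs) = N - k.natAbs := by omega
      rw [h1, h3, mul_comm ((N + k.natAbs)! : ℝ)]
    · have h1 : (k + ↑N).toNat = N - k.natAbs := by omega
      have h3 : 2*N - (N - k.natAbs) = N + k.natAbs := by omega
      rw [h1, h3, mul_comm ((N - k.natAbs)! : ℝ)]

open Nat in
/-- The combinatorial identity from Lemma (random selection unbiased):
∑_{k=-N}^{N} C(N,|k|)/C(N+|k|,|k|) = 2^{2N}/C(2N,N), equivalently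
2^{-2N} ∑_{j=0}^{2N} N!N!/(j!(2N-j)!) = N!N!/(2N)!. -/
theorem stmt3 (N : ℕ) (hN : 1 ≤ N) :
    (∑ k ∈ Finset.Icc (-(N:ℤ)) (N:ℤ),
        (Nat.choose N k.natAbs : ℝ) / (Nat.choose (N + k.natAbs) k.natAbs : ℝ))
      = 2 ^ (2*N) / (Nat.choose (2*N) N : ℝ) ∧
    (2:ℝ) ^ (-(2*(N:ℤ))) * (∑ j ∈ Finset.range (2*N+1),
        ((Nat.factorial N : ℝ) * (Nat.factorial N : ℝ)) /
          ((Nat.factorial j : ℝ) * (Nat.factorial (2*N - j) : ℝ)))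
      = ((Nat.factorial N : ℝ) * (Nat.factorial N : ℝ)) / (Nat.factorial (2*N) : ℝ) := by
  constructor
  · have hterm : ∀ k ∈ Finset.Icc (-(N:ℤ)) (N:ℤ),
        (Nat.choose N k.natAbs : ℝ) / (Nat.choose (N + k.natAbs) k.natAbs : ℝ)
          = ((N ! : ℝ) * (N ! : ℝ)) / (((N + k.natAbs)! : ℝ) * ((N - k.natAbs)! : ℝ)) := by
      intro k hk
      simp only [Finset.mem_Icc] at hk
      exact stmt3_termEq N k.natAbs (by omega)
    rw [Finset.sum_congr rfl hterm, stmt3_reindex, stmt3_sumRange,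
      Nat.cast_choose ℝ (by omega : N ≤ 2*N)]
    have h3 : ((N)! : ℝ) ≠ 0 := by positivity
    have h4 : 2*N - N = N := by omega
    have h5 : (((2*N)!) : ℝ) ≠ 0 := by positivity
    rw [h4]
    field_simp
  · rw [stmt3_sumRange]
    have h1 : (2:ℝ) ^ (-(2*(N:ℤ))) = ((2:ℝ) ^ (2*N))⁻¹ := by
      rw [zpow_neg]
      norm_cast
    have h5 : (((2*N)!) : ℝ) ≠ 0 := by positivity
    rw [h1]
    field_simp
end

section
/- Urn lemma: consider an urn with N = 2M balls, M white and M black, drawn one at a time uniformly at random without replacement until empty. If N is sufficiently large and 9·log₂ N ≤ k ≤ N/16, then the probability that there exists a contiguous window of at most 100k consecutively drawn balls containing k or fewer white balls is at most N^{−6}. -/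
open Finset

lemma choose_bd (k j : ℕ) (hj : j ≤ k) : Nat.choose (100*k) j ≤ 512^k := by
  have h1 : Nat.choose (100*k) j * 99^(100*k - j) ≤ 100^(100*k) := by
    have hexp : (1 + 99:ℕ)^(100*k) =
        ∑ m ∈ range (100*k+1), 1^m * 99^(100*k - m) * Nat.choose (100*k) m := add_pow 1 99 (100*k)
    have hmem : j ∈ range (100*k+1) := by
      simp only [mem_range]; omega
    have := Finset.single_le_sum
      (f := fun m => 1^m * 99^(100*k - m) * Nat.choose (100*k) m)
      (fun i _ => Nat.zero_le _) hmem
    calc Nat.choose (100*k) j * 99^(100*k - j)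
        = 1^j * 99^(100*k - j) * Nat.choose (100*k) j := by ring
      _ ≤ (1+99:ℕ)^(100*k) := by rw [hexp]; exact this
      _ = 100^(100*k) := by norm_num
  have h2 : 99^(99*k) ≤ 99^(100*k - j) := Nat.pow_le_pow_right (by norm_num) (by omega)
  have h3 : Nat.choose (100*k) j * 99^(99*k) ≤ 512^k * 99^(99*k) := by
    calc Nat.choose (100*k) j * 99^(99*k) ≤ Nat.choose (100*k) j * 99^(100*k - j) :=
          Nat.mul_le_mul_left _ h2
      _ ≤ 100^(100*k) := h1
      _ = (100^100)^k := by rw [← pow_mul, mul_comm]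
      _ ≤ (512 * 99^99)^k := Nat.pow_le_pow_left (by norm_num) k
      _ = 512^k * 99^(99*k) := by rw [mul_pow, ← pow_mul, mul_comm 99 k, mul_comm k 99]
  exact Nat.le_of_mul_le_mul_right h3 (Nat.pow_pos (by norm_num))

lemma window_card (N a L : ℕ) (h : a + L ≤ N) :
    (Finset.univ.filter fun i : Fin N => a ≤ (i:ℕ) ∧ (i:ℕ) < a + L).card = L := by
  classical
  have : L = (Finset.Ico a (a+L)).card := by rw [Nat.card_Ico]; omega
  conv_rhs => rw [this]
  refine Finset.card_bij (fun i _ => (i : ℕ)) ?_ ?_ ?_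
  · intro i hi
    simp only [mem_filter, mem_univ, true_and] at hi
    simp [Finset.mem_Ico, hi.1, hi.2]
  · intro i _ j _ hij
    exact Fin.val_injective hij
  · intro b hb
    simp only [Finset.mem_Ico] at hb
    exact ⟨⟨b, by omega⟩, by simp [hb.1, hb.2], rfl⟩

lemma count_bool_le (N k : ℕ) (W : Finset (Fin N)) :
    (Finset.univ.filter fun s : Fin N → Bool =>
        (W.filter fun i => s i = true).card ≤ k).card
      ≤ (∑ j ∈ range (k+1), (W.card).choose j) * 2^(N - W.card) := by
  classical
  have hle : (Finset.univ.filter fun s : Fin N → Bool =>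
        (W.filter fun i => s i = true).card ≤ k).card
      ≤ ((W.powerset.filter fun A => A.card ≤ k) ×ˢ Wᶜ.powerset).card := by
    apply Finset.card_le_card_of_injOn
      (fun s => (W.filter fun i => s i = true, Wᶜ.filter fun i => s i = true))
    · intro s hs
      simp only [Finset.mem_coe, mem_filter, mem_univ, true_and] at hs
      simp only [Finset.mem_coe, Finset.mem_product, mem_filter, Finset.mem_powerset]
      exact ⟨⟨Finset.filter_subset _ _, hs⟩, Finset.filter_subset _ _⟩
    · intro s _ t _ h
      have h1 := congrArg Prod.fst h
      have h2 := congrArg Prod.snd h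
      simp only at h1 h2
      funext i
      by_cases hi : i ∈ W
      · have := Finset.ext_iff.mp h1 i
        simp only [mem_filter, hi, true_and] at this
        cases hsi : s i <;> cases hti : t i <;> simp_all
      · have hi' : i ∈ Wᶜ := Finset.mem_compl.2 hi
        have := Finset.ext_iff.mp h2 i
        simp only [mem_filter, hi', true_and] at this
        cases hsi : s i <;> cases hti : t i <;> simp_all
  refine hle.trans ?_
  rw [Finset.card_product, Finset.card_powerset, Finset.card_compl, Fintype.card_fin]
  apply Nat.mul_le_mul_right
  calc (W.powerset.filter fun A => A.card ≤ k).card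
      ≤ ((range (k+1)).biUnion (fun j => W.powersetCard j)).card := by
        apply Finset.card_le_card
        intro A hA
        simp only [mem_filter, Finset.mem_powerset] at hA
        simp only [Finset.mem_biUnion, Finset.mem_powersetCard, mem_range]
        exact ⟨A.card, Nat.lt_succ_of_le hA.2, hA.1, rfl⟩
    _ ≤ ∑ j ∈ range (k+1), (W.powersetCard j).card := Finset.card_biUnion_le
    _ = ∑ j ∈ range (k+1), (W.card).choose j := by
        simp [Finset.card_powersetCard]

open scoped Classical in
lemma bad_card_le (M k : ℕ) :
    (Finset.univ.filter (fun s : Fin (2*M) → Bool =>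
        (Finset.univ.filter (fun i => s i = true)).card = M ∧
        ∃ a : ℕ, a + 100*k ≤ 2*M ∧
          (Finset.univ.filter
            (fun i : Fin (2*M) => a ≤ (i:ℕ) ∧ (i:ℕ) < a + 100*k ∧ s i = true)).card ≤ k)).card
      ≤ (2*M+1) * ((k+1) * 512^k * 2^(2*M - 100*k)) := by
  set N := 2*M with hN
  have hsub : (Finset.univ.filter (fun s : Fin N → Bool =>
        (Finset.univ.filter (fun i => s i = true)).card = M ∧
        ∃ a : ℕ, a + 100*k ≤ N ∧
          (Finset.univ.filter
            (fun i : Fin N => a ≤ (i:ℕ) ∧ (i:ℕ) < a + 100*k ∧ s i = true)).card ≤ k))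
      ⊆ (range (N+1)).biUnion (fun a => Finset.univ.filter (fun s : Fin N → Bool =>
          a + 100*k ≤ N ∧
          (Finset.univ.filter
            (fun i : Fin N => a ≤ (i:ℕ) ∧ (i:ℕ) < a + 100*k ∧ s i = true)).card ≤ k)) := by
    intro s hs
    simp only [mem_filter, mem_univ, true_and] at hs
    obtain ⟨-, a, ha, hw⟩ := hs
    rw [Finset.mem_biUnion]
    refine ⟨a, mem_range.2 (by omega), ?_⟩
    simp only [mem_filter, mem_univ, true_and]
    exact ⟨ha, hw⟩
  have hcard : ∀ a ∈ range (N+1),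
      (Finset.univ.filter (fun s : Fin N → Bool =>
          a + 100*k ≤ N ∧
          (Finset.univ.filter
            (fun i : Fin N => a ≤ (i:ℕ) ∧ (i:ℕ) < a + 100*k ∧ s i = true)).card ≤ k)).card
        ≤ (k+1) * 512^k * 2^(N - 100*k) := by
    intro a _
    by_cases ha : a + 100*k ≤ N
    · set W : Finset (Fin N) := Finset.univ.filter (fun i => a ≤ (i:ℕ) ∧ (i:ℕ) < a + 100*k)
        with hW
      have hWcard : W.card = 100*k := window_card N a (100*k) ha
      have heq : ∀ s : Fin N → Bool,
          (Finset.univ.filter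
            (fun i : Fin N => a ≤ (i:ℕ) ∧ (i:ℕ) < a + 100*k ∧ s i = true))
          = W.filter (fun i => s i = true) := by
        intro s
        rw [hW, Finset.filter_filter]
        apply Finset.filter_congr
        intro i _
        tauto
      calc (Finset.univ.filter (fun s : Fin N → Bool =>
          a + 100*k ≤ N ∧
          (Finset.univ.filter
            (fun i : Fin N => a ≤ (i:ℕ) ∧ (i:ℕ) < a + 100*k ∧ s i = true)).card ≤ k)).card
          ≤ (Finset.univ.filter (fun s : Fin N → Bool =>
              (W.filter (fun i => s i = true)).card ≤ k)).card := by
            apply Finset.card_le_card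
            intro s hs
            simp only [mem_filter, mem_univ, true_and] at hs ⊢
            rw [← heq s]
            exact hs.2
        _ ≤ (∑ j ∈ range (k+1), (W.card).choose j) * 2^(N - W.card) := count_bool_le N k W
        _ ≤ (k+1) * 512^k * 2^(N - 100*k) := by
            rw [hWcard]
            apply Nat.mul_le_mul_right
            calc (∑ j ∈ range (k+1), (100*k).choose j) ≤ ∑ _j ∈ range (k+1), 512^k := by
                  apply Finset.sum_le_sum
                  intro j hj
                  exact choose_bd k j (by simpa [Nat.lt_succ_iff] using hj)
              _ = (k+1) * 512^k := by
                  rw [Finset.sum_const, Finset.card_range, smul_eq_mul]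
    · convert Nat.zero_le _
      rw [Finset.card_eq_zero, Finset.filter_eq_empty_iff]
      intro s _
      simp [ha]
  calc _ ≤ _ := Finset.card_le_card hsub
    _ ≤ ∑ a ∈ range (N+1), (Finset.univ.filter (fun s : Fin N → Bool =>
          a + 100*k ≤ N ∧
          (Finset.univ.filter
            (fun i : Fin N => a ≤ (i:ℕ) ∧ (i:ℕ) < a + 100*k ∧ s i = true)).card ≤ k)).card :=
        Finset.card_biUnion_le
    _ ≤ ∑ _a ∈ range (N+1), (k+1) * 512^k * 2^(N - 100*k) := Finset.sum_le_sum hcard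
    _ = (N+1) * ((k+1) * 512^k * 2^(N - 100*k)) := by
        rw [Finset.sum_const, Finset.card_range, smul_eq_mul]


lemma assemble (x : ℝ) (M k : ℕ) (hx16 : 16 ≤ x) (hkN : (k:ℝ)+1 ≤ x)
    (key : x^(819:ℕ) ≤ (2:ℝ)^(91*k)) (h100 : 100*k ≤ 2*M) (hMx : ((2*M+1:ℕ):ℝ) ≤ x^2) :
    (((2*M+1) * ((k+1) * 512^k * 2^(2*M - 100*k)) : ℕ) : ℝ) * x^6 * x ≤ (2:ℝ)^(2*M) := by
  have hx0 : (0:ℝ) < x := by linarith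
  have hx1 : (1:ℝ) ≤ x := by linarith
  have hsplit : (2:ℝ)^(2*M) = 2^(91*k) * (2^(9*k) * 2^(2*M - 100*k)) := by
    rw [← pow_add, ← pow_add]; congr 1; omega
  have h512 : ((512:ℕ):ℝ)^k = 2^(9*k) := by
    norm_num
    rw [show (512:ℝ) = 2^9 by norm_num, ← pow_mul]
  have hK : (0:ℝ) ≤ (2:ℝ)^(9*k) * 2^(2*M-100*k) := by positivity
  have hcore : (((2*M+1:ℕ)):ℝ) * ((k:ℝ)+1) * x^7 ≤ (2:ℝ)^(91*k) := by
    have h10 : (((2*M+1:ℕ)):ℝ) * ((k:ℝ)+1) * x^7 ≤ x^10 := by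
      have : (((2*M+1:ℕ)):ℝ) * ((k:ℝ)+1) * x^7 ≤ x^2 * x * x^7 := by
        have hk0 : (0:ℝ) ≤ (k:ℝ)+1 := by positivity
        have hx7 : (0:ℝ) ≤ x^7 := by positivity
        have hM0 : (0:ℝ) ≤ ((2*M+1:ℕ):ℝ) := by positivity
        have h1 := mul_le_mul hMx hkN hk0 (by positivity : (0:ℝ) ≤ x^2)
        exact mul_le_mul_of_nonneg_right h1 hx7
      calc _ ≤ x^2 * x * x^7 := this
        _ = x^10 := by ring
    refine h10.trans (le_trans ?_ key)
    exact pow_le_pow_right₀ hx1 (by norm_num)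
  push_cast
  push_cast at hcore hMx
  calc ((2*(M:ℝ))+1) * (((k:ℝ)+1) * 512^k * 2^(2*M - 100*k)) * x^6 * x
      = (((2*(M:ℝ))+1) * ((k:ℝ)+1) * x^7) * (2^(9*k) * 2^(2*M-100*k)) := by
        rw [show ((512:ℝ))^k = 2^(9*k) by rw [show (512:ℝ) = 2^9 by norm_num, ← pow_mul]]
        ring
    _ ≤ (2:ℝ)^(91*k) * (2^(9*k) * 2^(2*M-100*k)) := mul_le_mul_of_nonneg_right hcore hK
    _ = (2:ℝ)^(2*M) := hsplit.symm

open scoped Classical in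
/-- Urn lemma: for a uniformly random arrangement of M white and M black balls
(N = 2M, N sufficiently large) and 9 log₂ N ≤ k ≤ N/16, the probability that some
contiguous window of 100k drawn balls contains k or fewer white balls is at most N^{-6}.
The probability is the ratio of the number of balanced sequences with such a window to
the total number C(2M, M) of balanced sequences. -/
theorem stmt7 : ∃ N₀ : ℕ, ∀ M k : ℕ, N₀ ≤ 2*M →
    9 * Real.logb 2 (2*M) ≤ (k:ℝ) → (k:ℝ) ≤ (2*M : ℝ)/16 →
    (((Finset.univ.filter (fun s : Fin (2*M) → Bool =>
        (Finset.univ.filter (fun i => s i = true)).card = M ∧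
        ∃ a : ℕ, a + 100*k ≤ 2*M ∧
          (Finset.univ.filter
            (fun i : Fin (2*M) => a ≤ (i:ℕ) ∧ (i:ℕ) < a + 100*k ∧ s i = true)).card ≤ k)).card
        : ℝ) / (Nat.choose (2*M) M : ℝ))
      ≤ ((2*M : ℝ))^(-(6:ℤ)) := by
  use 16
  intro M k hN hk9 hk16
  set x : ℝ := (2*M : ℝ) with hx
  have hxN : x = ((2*M : ℕ) : ℝ) := by push_cast; ring
  have hx16 : (16:ℝ) ≤ x := by rw [hxN]; exact_mod_cast hN
  have hx0 : (0:ℝ) < x := by linarith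
  have hx1 : (1:ℝ) ≤ x := by linarith
  have hCpos : (0:ℝ) < (Nat.choose (2*M) M : ℝ) := by
    exact_mod_cast Nat.choose_pos (by omega)
  have hkN : (k:ℝ) + 1 ≤ x := by
    have : (k:ℝ) ≤ x/16 := hk16
    linarith
  have hkNnat : k + 1 ≤ 2*M := by exact_mod_cast (by push_cast; linarith : ((k+1:ℕ):ℝ) ≤ ((2*M:ℕ):ℝ))
  by_cases h100 : 100*k ≤ 2*M
  · -- main case
    rw [div_le_iff₀ hCpos]
    have hzpow : x^(-(6:ℤ)) = (x^(6:ℕ))⁻¹ := by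
      rw [zpow_neg]
      norm_cast
    rw [hzpow, inv_mul_eq_div, le_div_iff₀ (by positivity)]
    -- goal : cardB * x^6 ≤ C
    have hB : ((Finset.univ.filter (fun s : Fin (2*M) → Bool =>
        (Finset.univ.filter (fun i => s i = true)).card = M ∧
        ∃ a : ℕ, a + 100*k ≤ 2*M ∧
          (Finset.univ.filter
            (fun i : Fin (2*M) => a ≤ (i:ℕ) ∧ (i:ℕ) < a + 100*k ∧ s i = true)).card ≤ k)).card
        : ℝ) ≤ ((2*M+1) * ((k+1) * 512^k * 2^(2*M - 100*k)) : ℕ) := by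
      exact_mod_cast bad_card_le M k
    have hpowC : (2:ℝ)^(2*M) ≤ x * (Nat.choose (2*M) M : ℝ) := by
      have h4 : (4:ℕ)^M ≤ 2*M * Nat.centralBinom M :=
        Nat.four_pow_le_two_mul_self_mul_centralBinom M (by omega)
      rw [Nat.centralBinom] at h4
      have := (Nat.cast_le (α := ℝ)).2 h4
      push_cast at this
      calc (2:ℝ)^(2*M) = 4^M := by rw [pow_mul]; norm_num
        _ ≤ x * (Nat.choose (2*M) M : ℝ) := by rw [hx]; convert this using 2 <;> push_cast <;> ring
    -- key exponential bound
    have hlogb : Real.logb 2 x * 819 ≤ ((91*k : ℕ) : ℝ) := by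
      push_cast
      nlinarith [hk9]
    have key : x^(819:ℕ) ≤ (2:ℝ)^(91*k) := by
      calc x^(819:ℕ) = x ^ ((819:ℕ):ℝ) := (Real.rpow_natCast x 819).symm
        _ = ((2:ℝ) ^ Real.logb 2 x) ^ ((819:ℕ):ℝ) := by
            rw [Real.rpow_logb (by norm_num) (by norm_num) hx0]
        _ = (2:ℝ) ^ (Real.logb 2 x * ((819:ℕ):ℝ)) := (Real.rpow_mul (by norm_num) _ _).symm
        _ ≤ (2:ℝ) ^ (((91*k : ℕ):ℝ)) := by
            apply Real.rpow_le_rpow_of_exponent_le one_le_two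
            push_cast at hlogb ⊢
            linarith
        _ = (2:ℝ) ^ (91*k) := Real.rpow_natCast 2 (91*k)
    -- assemble
    have hsplit : (2:ℝ)^(2*M) = 2^(91*k) * 2^(9*k) * 2^(2*M - 100*k) := by
      rw [← pow_add, ← pow_add]
      congr 1
      omega
    have h512 : ((512:ℝ))^k = 2^(9*k) := by
      rw [show (512:ℝ) = 2^9 by norm_num, ← pow_mul]
    have hNx : ((2*M+1 : ℕ) : ℝ) ≤ x^2 := by
      push_cast
      nlinarith
    have hkx : ((k+1 : ℕ) : ℝ) ≤ x := by push_cast; linarith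
    have hmain : (((2*M+1) * ((k+1) * 512^k * 2^(2*M - 100*k)) : ℕ) : ℝ) * x^6
        ≤ (2:ℝ)^(2*M) / x := by
      rw [le_div_iff₀ hx0]
      apply assemble x M k hx16 hkN key h100
      rw [hx]; push_cast; nlinarith
    calc _ ≤ (((2*M+1) * ((k+1) * 512^k * 2^(2*M - 100*k)) : ℕ) : ℝ) * x^6 :=
          mul_le_mul_of_nonneg_right hB (by positivity)
      _ ≤ (2:ℝ)^(2*M) / x := hmain
      _ ≤ (Nat.choose (2*M) M : ℝ) := by
          rw [div_le_iff₀ hx0]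
          linarith [hpowC]
  · -- degenerate case : no window fits
    have hempty : (Finset.univ.filter (fun s : Fin (2*M) → Bool =>
        (Finset.univ.filter (fun i => s i = true)).card = M ∧
        ∃ a : ℕ, a + 100*k ≤ 2*M ∧
          (Finset.univ.filter
            (fun i : Fin (2*M) => a ≤ (i:ℕ) ∧ (i:ℕ) < a + 100*k ∧ s i = true)).card ≤ k)) = ∅ := by
      rw [Finset.filter_eq_empty_iff]
      rintro s - ⟨-, a, ha, -⟩
      omega
    rw [hempty]
    simp only [Finset.card_empty, Nat.cast_zero, zero_div]
    positivity
end

section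
/- Test on a bad vertex succeeds with probability at most p: if S has maximum dislocation at most d, x has true rank i*, and either L ≥ i* + d or R ≤ i* − d − 1 for the two tested positions L and R, and each comparison errs independently with probability p, then the probability of observing both s_L < x and x < s_R is at most p. -/
open MeasureTheory in
/-- A test on a bad vertex succeeds with probability at most p: if either L ≥ i* + d or
R ≤ i* - d - 1, and each comparison errs independently with probability p, then the
probability of observing both s_L < x and x < s_R is at most p. -/
theorem stmt11 {α : Type*} [LinearOrder α] {n : ℕ} (S : Fin n → α)
    (hinj : Function.Injective S) (d : ℕ)
    (hdisl : ∀ i : Fin n,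
      |(i : ℤ) - ((Finset.univ.filter (fun j => S j < S i)).card : ℤ)| ≤ (d : ℤ))
    (x : α) (hx : ∀ i, S i ≠ x)
    (istar : ℕ) (histar : istar = (Finset.univ.filter (fun j => S j < x)).card)
    (L R : Fin n)
    (hbad : (istar : ℤ) + d ≤ (L : ℤ) ∨ (R : ℤ) ≤ (istar : ℤ) - d - 1)
    {Ω : Type*} [MeasurableSpace Ω] (μ : Measure Ω) [IsProbabilityMeasure μ]
    (p : ℝ) (hp0 : 0 ≤ p) (hp : p < 1/2)
    (obsL obsR : Ω → Bool)
    (herrL : μ {ω | obsL ω ≠ decide (S L < x)} = ENNReal.ofReal p)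
    (herrR : μ {ω | obsR ω ≠ decide (x < S R)} = ENNReal.ofReal p) :
    μ {ω | obsL ω = true ∧ obsR ω = true} ≤ ENNReal.ofReal p := by
  rcases hbad with hL | hR
  · -- S L > x
    have hgt : ¬ (S L < x) := by
      intro h
      have hsub : insert L (Finset.univ.filter (fun j => S j < S L)) ⊆
          Finset.univ.filter (fun j => S j < x) := by
        intro j hj
        simp only [Finset.mem_insert, Finset.mem_filter, Finset.mem_univ, true_and] at hj ⊢
        rcases hj with rfl | hj
        · exact h
        · exact hj.trans h
      have hnotmem : L ∉ Finset.univ.filter (fun j => S j < S L) := by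
        simp
      have hcard := Finset.card_le_card hsub
      rw [Finset.card_insert_of_notMem hnotmem] at hcard
      have hd := hdisl L
      rw [abs_le] at hd
      omega
    have hdec : decide (S L < x) = false := by simp [hgt]
    refine le_trans (measure_mono ?_) (le_of_eq herrL)
    intro ω hω
    simp only [Set.mem_setOf_eq, hdec] at *
    simp [hω.1]
  · -- S R < x
    have hlt : ¬ (x < S R) := by
      intro h
      have hsub : (Finset.univ.filter (fun j => S j < x)) ⊆
          Finset.univ.filter (fun j => S j < S R) := by
        intro j hj
        simp only [Finset.mem_filter, Finset.mem_univ, true_and] at hj ⊢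
        exact hj.trans h
      have hcard := Finset.card_le_card hsub
      have hd := hdisl R
      rw [abs_le] at hd
      omega
    have hdec : decide (x < S R) = false := by simp [hlt]
    refine le_trans (measure_mono ?_) (le_of_eq herrR)
    intro ω hω
    simp only [Set.mem_setOf_eq, hdec] at *
    simp [hω.2]
end

section
/- In one round of WindowSort with window size w, where each element x_i at position i receives score_w(x_i) = max{0, i−w} + |{x_j : |j−i| ≤ w, x_j < x_i observed}|, and elements are re-sorted by score: every element moves by at most 2w positions, i.e., |pos(x, S_w) − pos(x, S_{w/2})| ≤ 2w for all x. -/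
open scoped Classical in
/-- One round of WindowSort with window size w: element x_i at position i gets score
max{0, i-w} plus the number of elements x_j with |j-i| ≤ w (j ≠ i) observed smaller than
x_i; re-sorting by non-decreasing score (π maps new positions to old positions) moves every
element by at most 2w positions. -/
theorem stmt15 {α : Type*} {n : ℕ} (w : ℕ) (x : Fin n → α)
    (obs : α → α → Bool)
    (score : Fin n → ℕ)
    (hscore : ∀ i : Fin n, score i = ((i:ℕ) - w) +
      (Finset.univ.filter (fun j : Fin n =>
        j ≠ i ∧ (i:ℤ) - w ≤ (j:ℤ) ∧ (j:ℤ) ≤ (i:ℤ) + w ∧ obs (x j) (x i) = true)).card)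
    (π : Equiv.Perm (Fin n))
    (hsorted : ∀ a b : Fin n, a ≤ b → score (π a) ≤ score (π b)) :
    ∀ i : Fin n, |((π.symm i : ℕ) : ℤ) - (i : ℤ)| ≤ 2 * w := by
  have hlow : ∀ j : Fin n, (j : ℤ) - w ≤ (score j : ℤ) := by
    intro j
    have h := hscore j
    omega
  have hupp : ∀ j : Fin n, (score j : ℤ) ≤ (j : ℤ) + w := by
    intro j
    have hc : (Finset.univ.filter (fun k : Fin n =>
        k ≠ j ∧ (j:ℤ) - w ≤ (k:ℤ) ∧ (k:ℤ) ≤ (j:ℤ) + w ∧ obs (x k) (x j) = true)).card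
        ≤ ((Finset.Icc ((j:ℕ) - w) ((j:ℕ) + w)).erase (j:ℕ)).card := by
      refine Finset.card_le_card_of_injOn (fun k => (k : ℕ)) ?_ ?_
      · intro k hk
        simp only [Finset.mem_coe, Finset.mem_filter, Finset.mem_univ, true_and] at hk
        obtain ⟨hne, h1, h2, _⟩ := hk
        simp only [Finset.mem_coe, Finset.mem_erase, Finset.mem_Icc]
        refine ⟨fun hval => hne (Fin.val_injective hval), by omega, by omega⟩
      · intro b _ c _ hbc
        exact Fin.val_injective hbc
    have hmem : (j : ℕ) ∈ Finset.Icc ((j:ℕ) - w) ((j:ℕ) + w) := by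
      simp only [Finset.mem_Icc]; omega
    rw [Finset.card_erase_of_mem hmem, Nat.card_Icc] at hc
    have h := hscore j
    omega
  intro i
  set a := π.symm i with ha
  have hπa : π a = i := Equiv.apply_symm_apply π i
  have h1 : (a : ℕ) ≤ (i : ℕ) + 2 * w := by
    by_contra h
    push_neg at h
    have hcard : (Finset.Iic a).card ≤ (Finset.range ((i:ℕ) + 2*w + 1)).card := by
      refine Finset.card_le_card_of_injOn (fun b => ((π b : Fin n) : ℕ)) ?_ ?_
      · intro b hb
        simp only [Finset.mem_coe, Finset.mem_Iic] at hb
        have h2 := hsorted b a hb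
        rw [hπa] at h2
        have h3 := hlow (π b)
        have h4 := hupp i
        simp only [Finset.mem_coe, Finset.mem_range]
        omega
      · intro b _ c _ hbc
        exact π.injective (Fin.val_injective hbc)
    rw [Fin.card_Iic, Finset.card_range] at hcard
    omega
  have h2 : (i : ℕ) ≤ (a : ℕ) + 2 * w := by
    by_contra h
    push_neg at h
    have hcard : (Finset.Ici a).card ≤ (Finset.Ico ((i:ℕ) - 2*w) n).card := by
      refine Finset.card_le_card_of_injOn (fun b => ((π b : Fin n) : ℕ)) ?_ ?_
      · intro b hb
        simp only [Finset.mem_coe, Finset.mem_Ici] at hb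
        have h2 := hsorted a b hb
        rw [hπa] at h2
        have h3 := hupp (π b)
        have h4 := hlow i
        simp only [Finset.mem_coe, Finset.mem_Ico]
        exact ⟨by omega, (π b).isLt⟩
      · intro b _ c _ hbc
        exact π.injective (Fin.val_injective hbc)
    rw [Fin.card_Ici, Nat.card_Ico] at hcard
    have hi := i.isLt
    have hai := a.isLt
    omega
  rw [abs_le]
  constructor <;> [skip; skip] <;> omega
end

section
/- Lower bound via reduction: if there exists a comparison-based algorithm that, given n elements, produces in T(n) time a sequence with maximum dislocation at most d = O(log n) even without comparison errors, then n elements can be exactly sorted in T(n) + O(n log log n) comparisons; hence, by the Ω(n log n) comparison-sorting lower bound, T(n) = Ω(n log n). The reduction: repeatedly sort the first m = 2·max{d, log n} elements of the approximate sequence exactly (the smallest m/2 of them are the overall smallest remaining elements), remove them, and repeat n/m times, costing O((n/m)·m log m) = O(n log log n) extra comparisons. -/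
/-- A comparison-based algorithm, modeled as a binary decision tree: internal nodes query
the comparison of two elements (indices in Fin n), leaves output, for each element, the
position it is placed at. -/
inductive CompTree (n : ℕ) : Type
  | leaf (out : Fin n → ℤ) : CompTree n
  | node (i j : Fin n) (l r : CompTree n) : CompTree n

/-- The depth of a decision tree (worst-case number of comparisons). -/
def CompTree.depth {n : ℕ} : CompTree n → ℕ
  | .leaf _ => 0
  | .node _ _ l r => max l.depth r.depth + 1

/-- Running a decision tree on an input whose true order is given by the ranking
permutation σ (σ i is the rank of element i): each comparison is answered correctly
(no errors). -/
def CompTree.run {n : ℕ} (σ : Equiv.Perm (Fin n)) : CompTree n → (Fin n → ℤ)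
  | .leaf out => out
  | .node i j l r => if σ i < σ j then l.run σ else r.run σ

def CompTree.outs {n : ℕ} : CompTree n → Finset (Fin n → ℤ)
  | .leaf o => {o}
  | .node _ _ l r => l.outs ∪ r.outs

lemma CompTree.card_outs_le {n : ℕ} (t : CompTree n) : t.outs.card ≤ 2 ^ t.depth := by
  induction t with
  | leaf o => simp [outs, depth]
  | node i j l r hl hr =>
    calc (CompTree.node i j l r).outs.card ≤ l.outs.card + r.outs.card :=
          Finset.card_union_le _ _
      _ ≤ 2 ^ l.depth + 2 ^ r.depth := Nat.add_le_add hl hr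
      _ ≤ 2 ^ (max l.depth r.depth) + 2 ^ (max l.depth r.depth) := by
          gcongr <;> simp
      _ = 2 ^ (CompTree.node i j l r).depth := by
          show _ = 2 ^ (max l.depth r.depth + 1); rw [pow_succ]; ring

lemma CompTree.run_mem_outs {n : ℕ} (t : CompTree n) (σ : Equiv.Perm (Fin n)) :
    t.run σ ∈ t.outs := by
  induction t with
  | leaf o => simp [outs, run]
  | node i j l r hl hr =>
    show (if σ i < σ j then l.run σ else r.run σ) ∈ l.outs ∪ r.outs
    split <;> simp [Finset.mem_union, hl, hr]

lemma fiber_card_le {n d : ℕ} (out : Fin n → ℤ) :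
    (Finset.univ.filter (fun σ : Equiv.Perm (Fin n) =>
      ∀ i, |out i - ((σ i : ℕ) : ℤ)| ≤ (d : ℤ))).card ≤ (2 * d + 1) ^ n := by
  classical
  set S : Fin n → Finset (Fin n) :=
    fun i => Finset.univ.filter (fun k : Fin n => |out i - ((k : ℕ) : ℤ)| ≤ (d : ℤ)) with hS
  have hcardS : ∀ i, (S i).card ≤ 2 * d + 1 := by
    intro i
    have : (S i).card ≤ (Finset.Icc (out i - d) (out i + d)).card := by
      apply Finset.card_le_card_of_injOn (f := fun k : Fin n => ((k : ℕ) : ℤ))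
      · intro k hk
        simp only [hS, Finset.mem_coe, Finset.mem_filter, Finset.mem_univ, true_and] at hk
        simp only [Finset.mem_coe, Finset.mem_Icc]
        rw [abs_le] at hk
        omega
      · intro a _ b _ hab
        simp only at hab
        exact Fin.ext (by exact_mod_cast hab)
    rw [Int.card_Icc] at this
    omega
  have step1 : (Finset.univ.filter (fun σ : Equiv.Perm (Fin n) =>
      ∀ i, |out i - ((σ i : ℕ) : ℤ)| ≤ (d : ℤ))).card ≤ (Fintype.piFinset S).card := by
        apply Finset.card_le_card_of_injOn (f := fun σ : Equiv.Perm (Fin n) => ⇑σ)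
        · intro σ hσ
          simp only [Finset.mem_coe, Finset.mem_filter, Finset.mem_univ, true_and] at hσ
          rw [Finset.mem_coe, Fintype.mem_piFinset]
          intro i
          simp [hS, hσ i]
        · intro a _ b _ hab
          exact Equiv.coe_fn_injective hab
  calc (Finset.univ.filter (fun σ : Equiv.Perm (Fin n) =>
        ∀ i, |out i - ((σ i : ℕ) : ℤ)| ≤ (d : ℤ))).card ≤ (Fintype.piFinset S).card := step1
    _ = ∏ i, (S i).card := Fintype.card_piFinset S
    _ ≤ ∏ _i : Fin n, (2 * d + 1) := Finset.prod_le_prod (by simp) (fun i _ => hcardS i)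
    _ = (2 * d + 1) ^ n := by simp

lemma count_bound {n d : ℕ} (t : CompTree n)
    (h : ∀ σ : Equiv.Perm (Fin n), ∀ i : Fin n, |t.run σ i - ((σ i : ℕ) : ℤ)| ≤ (d : ℤ)) :
    Nat.factorial n ≤ (2 * d + 1) ^ n * 2 ^ t.depth := by
  classical
  have key : (Finset.univ : Finset (Equiv.Perm (Fin n))).card ≤
      (2 * d + 1) ^ n * (Finset.univ.image t.run).card := by
    apply Finset.card_le_mul_card_image
    intro out _
    calc (Finset.univ.filter (fun σ : Equiv.Perm (Fin n) => t.run σ = out)).card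
        ≤ (Finset.univ.filter (fun σ : Equiv.Perm (Fin n) =>
            ∀ i, |out i - ((σ i : ℕ) : ℤ)| ≤ (d : ℤ))).card := by
          apply Finset.card_le_card
          intro σ hσ
          simp only [Finset.mem_filter, Finset.mem_univ, true_and] at hσ ⊢
          intro i; rw [← hσ]; exact h σ i
      _ ≤ (2 * d + 1) ^ n := fiber_card_le out
  have himg : (Finset.univ.image t.run).card ≤ 2 ^ t.depth := by
    refine le_trans (Finset.card_le_card ?_) t.card_outs_le
    intro o ho
    rw [Finset.mem_image] at ho
    obtain ⟨σ, _, rfl⟩ := ho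
    exact t.run_mem_outs σ
  calc Nat.factorial n = (Finset.univ : Finset (Equiv.Perm (Fin n))).card := by
        rw [Finset.card_univ, Fintype.card_perm, Fintype.card_fin]
    _ ≤ (2 * d + 1) ^ n * (Finset.univ.image t.run).card := key
    _ ≤ (2 * d + 1) ^ n * 2 ^ t.depth := by gcongr

lemma fact_lower (n : ℕ) : (n / 2) ^ (n / 2) ≤ Nat.factorial n := by
  have h1 : (n / 2) ^ (n / 2) ≤ (n / 2 + 1) ^ (n - n / 2) := by
    calc (n / 2) ^ (n / 2) ≤ (n / 2 + 1) ^ (n / 2) :=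
          Nat.pow_le_pow_left (Nat.le_succ _) _
      _ ≤ (n / 2 + 1) ^ (n - n / 2) := Nat.pow_le_pow_right (by omega) (by omega)
  calc (n / 2) ^ (n / 2) ≤ (n / 2 + 1) ^ (n - n / 2) := h1
    _ ≤ Nat.factorial (n / 2) * (n / 2 + 1) ^ (n - n / 2) :=
        Nat.le_mul_of_pos_left _ (Nat.factorial_pos _)
    _ ≤ Nat.factorial (n / 2 + (n - n / 2)) := Nat.factorial_mul_pow_le_factorial
    _ = Nat.factorial n := by congr 1; omega

lemma asymp (C : ℝ) (hC : 0 < C) :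
    ∃ x₀ : ℝ, ∀ x : ℝ, x₀ ≤ x → 2 * C * Real.logb 2 x + 1 ≤ x ^ ((1:ℝ)/16) := by
  have h1 : (fun x : ℝ => 2 * C * Real.logb 2 x + 1) =o[Filter.atTop]
      (fun x : ℝ => x ^ ((1:ℝ)/16)) := by
    have hlog := isLittleO_log_rpow_atTop (r := (1:ℝ)/16) (by norm_num)
    have h2 : (fun x : ℝ => 2 * C * Real.logb 2 x) =o[Filter.atTop]
        (fun x : ℝ => x ^ ((1:ℝ)/16)) := by
      have := hlog.const_mul_left (2 * C / Real.log 2)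
      refine this.congr_left fun x => ?_
      simp [Real.logb]
      ring
    refine h2.add ?_
    refine Asymptotics.isLittleO_const_left.2 <| Or.inr <| ?_
    have ht := tendsto_rpow_atTop (y := (1:ℝ)/16) (by norm_num)
    refine Filter.tendsto_atTop_mono' _ ?_ ht
    filter_upwards [Filter.eventually_ge_atTop (0:ℝ)] with x hx
    simp [Real.norm_eq_abs, abs_of_nonneg (Real.rpow_nonneg hx _), Function.comp]
  have h3 := (h1.bound one_pos).and (Filter.eventually_ge_atTop (1:ℝ))
  rw [Filter.eventually_atTop] at h3
  obtain ⟨x₀, hx₀⟩ := h3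
  refine ⟨max x₀ 1, fun x hx => ?_⟩
  obtain ⟨hb, hx1⟩ := hx₀ x (le_trans (le_max_left _ _) hx)
  have hxpos : (0:ℝ) < x := lt_of_lt_of_le one_pos hx1
  calc 2 * C * Real.logb 2 x + 1 ≤ ‖2 * C * Real.logb 2 x + 1‖ := le_abs_self _
    _ ≤ 1 * ‖x ^ ((1:ℝ)/16)‖ := hb
    _ = x ^ ((1:ℝ)/16) := by
        rw [one_mul, Real.norm_eq_abs, abs_of_nonneg (Real.rpow_nonneg hxpos.le _)]

/-- Lower bound: any error-free comparison-based algorithm that on every input produces a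
sequence with maximum dislocation at most d = O(log n) must use Ω(n log n) comparisons. -/
theorem stmt18 : ∀ C : ℝ, 0 < C → ∃ c : ℝ, 0 < c ∧ ∃ N₀ : ℕ, ∀ n : ℕ, N₀ ≤ n →
    ∀ d : ℕ, (d : ℝ) ≤ C * Real.logb 2 n →
    ∀ t : CompTree n,
      (∀ σ : Equiv.Perm (Fin n), ∀ i : Fin n, |t.run σ i - ((σ i : ℕ) : ℤ)| ≤ (d : ℤ)) →
      c * n * Real.logb 2 n ≤ (t.depth : ℝ) := by
  intro C hC
  refine ⟨1/16, by norm_num, ?_⟩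
  obtain ⟨x₀, hx₀⟩ := asymp C hC
  refine ⟨max (Nat.ceil x₀) 65536, fun n hn d hd t ht => ?_⟩
  have hn2 : 65536 ≤ n := le_trans (le_max_right _ _) hn
  have hnR : (65536:ℝ) ≤ (n:ℝ) := by exact_mod_cast hn2
  have hnpos : (0:ℝ) < n := by linarith
  set L := Real.logb 2 (n:ℝ) with hLdef
  have hlogbtwo : Real.logb 2 2 = 1 := Real.logb_self_eq_one (by norm_num : (1:ℝ) < 2)
  have hL16 : 16 ≤ L := by
    rw [hLdef, Real.le_logb_iff_rpow_le one_lt_two hnpos]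
    rw [show ((2:ℝ) ^ (16:ℝ)) = 65536 by
      rw [show (16:ℝ) = ((16:ℕ):ℝ) by norm_num, Real.rpow_natCast]; norm_num]
    exact hnR
  -- bound on logb 2 (2d+1)
  have hdL : (d:ℝ) ≤ C * L := hd
  have hxle : x₀ ≤ (n:ℝ) := by
    have : Nat.ceil x₀ ≤ n := le_trans (le_max_left _ _) hn
    exact le_trans (Nat.le_ceil x₀) (by exact_mod_cast this)
  have h2d : 2 * C * L + 1 ≤ (n:ℝ) ^ ((1:ℝ)/16) := hx₀ n hxle
  have hdpos : (0:ℝ) < ((2 * d + 1 : ℕ) : ℝ) := by positivity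
  have hlogd : Real.logb 2 ((2 * d + 1 : ℕ) : ℝ) ≤ L / 16 := by
    have step1 : ((2 * d + 1 : ℕ) : ℝ) ≤ (n:ℝ) ^ ((1:ℝ)/16) := by
      push_cast
      nlinarith
    have := Real.logb_le_logb_of_le (b := 2) one_lt_two hdpos step1
    rwa [Real.logb_rpow_eq_mul_logb_of_pos hnpos, ← hLdef, one_div,
      inv_mul_eq_div] at this
  -- upper bound on logb of factorial
  have hcount := count_bound t ht
  have hcountR : ((Nat.factorial n : ℕ) : ℝ) ≤
      ((2 * d + 1 : ℕ) : ℝ) ^ n * (2:ℝ) ^ t.depth := by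
    exact_mod_cast hcount
  have hfactpos : (0:ℝ) < ((Nat.factorial n : ℕ) : ℝ) := by
    exact_mod_cast Nat.factorial_pos n
  have hub : Real.logb 2 ((Nat.factorial n : ℕ) : ℝ) ≤
      n * Real.logb 2 ((2 * d + 1 : ℕ) : ℝ) + t.depth := by
    have h := Real.logb_le_logb_of_le (b := 2) one_lt_two hfactpos hcountR
    rwa [Real.logb_mul (by positivity) (by positivity), Real.logb_pow,
      Real.logb_pow, hlogbtwo, mul_one] at h
  -- lower bound on logb of factorial
  have hn4 : (4:ℕ) ≤ n := by omega
  have hhalfpos : 0 < n / 2 := by omega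
  have hfl := fact_lower n
  have hflR : (((n/2 : ℕ) : ℝ)) ^ (n/2 : ℕ) ≤ ((Nat.factorial n : ℕ) : ℝ) := by
    exact_mod_cast hfl
  have hhalfposR : (0:ℝ) < ((n/2 : ℕ) : ℝ) := by exact_mod_cast hhalfpos
  have hlb : ((n/2 : ℕ) : ℝ) * Real.logb 2 ((n/2 : ℕ) : ℝ) ≤
      Real.logb 2 ((Nat.factorial n : ℕ) : ℝ) := by
    have h := Real.logb_le_logb_of_le (b := 2) one_lt_two
      (x := (((n/2 : ℕ) : ℝ)) ^ (n/2 : ℕ)) (by positivity) hflR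
    rwa [Real.logb_pow] at h
  -- (n/4)(L-2) ≤ (n/2)·logb(n/2)
  have hquarter : (n:ℝ)/4 ≤ ((n/2 : ℕ) : ℝ) := by
    have : n ≤ 4 * (n / 2) := by omega
    have := (Nat.cast_le (α := ℝ)).2 this
    push_cast at this
    linarith
  have hlog4 : Real.logb 2 ((n:ℝ)/4) = L - 2 := by
    rw [Real.logb_div (by positivity) (by norm_num), ← hLdef]
    have : Real.logb 2 (4:ℝ) = 2 := by
      have : ((2:ℝ)^(2:ℕ)) = 4 := by norm_num
      rw [← this, Real.logb_pow, hlogbtwo]; ring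
    rw [this]
  have hloghalf : L - 2 ≤ Real.logb 2 ((n/2 : ℕ) : ℝ) := by
    rw [← hlog4]
    exact Real.logb_le_logb_of_le one_lt_two (by positivity) hquarter
  have hmain : (n:ℝ)/4 * (L - 2) ≤ ((n/2 : ℕ) : ℝ) * Real.logb 2 ((n/2 : ℕ) : ℝ) :=
    mul_le_mul hquarter hloghalf (by linarith) hhalfposR.le
  -- combine
  have hd16 : n * Real.logb 2 ((2 * d + 1 : ℕ) : ℝ) ≤ n * (L / 16) := by
    apply mul_le_mul_of_nonneg_left hlogd hnpos.le
  nlinarith [hub, hlb, hmain, hd16, hnpos, hL16]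
end
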